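/- Deterministic no-signalling models have zero Hardy probability: Let p(a,b,c|x,y,z) be a tripartite conditional distribution that is deterministic (every probability is 0 or 1) and satisfies the no-signalling conditions (all single-party and two-party marginals are independent of the remaining parties' settings). If p satisfies the four Hardy zero constraints p_{AB}(+1,+1|1,0)=0, p_{BC}(+1,+1|1,0)=0, p_{AC}(+1,+1|0,1)=0, p(-1,-1,-1|1,1,1)=0, then p(+1,+1,+1|0,0,0)=0. -/
import Mathlib


open Finset

/-- Deterministic no-signalling tripartite models satisfying the four Hardy zero
constraints have zero Hardy probability. -/
theorem hardy_zero_deterministic_no_signalling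
    (p : Bool → Bool → Bool → Fin 2 → Fin 2 → Fin 2 → ℝ)
    (hdet : ∀ a b c x y z, p a b c x y z = 0 ∨ p a b c x y z = 1)
    (hnorm : ∀ x y z, ∑ a, ∑ b, ∑ c, p a b c x y z = 1)
    -- no-signalling: two-party marginals are independent of the remaining setting
    (hNSz : ∀ a b x y z z', ∑ c, p a b c x y z = ∑ c, p a b c x y z')
    (hNSy : ∀ a c x y y' z, ∑ b, p a b c x y z = ∑ b, p a b c x y' z)
    (hNSx : ∀ b c x x' y z, ∑ a, p a b c x y z = ∑ a, p a b c x' y z)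
    -- Hardy zero constraints
    (h1 : ∀ z, ∑ c, p true true c 1 0 z = 0)
    (h2 : ∀ x, ∑ a, p a true true x 1 0 = 0)
    (h3 : ∀ y, ∑ b, p true b true 0 y 1 = 0)
    (h4 : p false false false 1 1 1 = 0) :
    p true true true 0 0 0 = 0 := by
  by_contra hP
  have hP1 : p true true true 0 0 0 = 1 := (hdet _ _ _ _ _ _).resolve_left hP
  have hb : ∀ a b c x y z, 0 ≤ p a b c x y z ∧ p a b c x y z ≤ 1 := by
    intro a b c x y z
    rcases hdet a b c x y z with h | h <;> simp [h]
  -- marginal invariance lemmas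
  have MAinv : ∀ a x y y' z z',
      (∑ b : Bool, ∑ c : Bool, p a b c x y z) = ∑ b, ∑ c, p a b c x y' z' := by
    intro a x y y' z z'
    rw [Finset.sum_congr rfl fun b _ => hNSz a b x y z z', Finset.sum_comm,
      Finset.sum_congr rfl fun c _ => hNSy a c x y y' z', Finset.sum_comm]
  have MBinv : ∀ b x x' y z z',
      (∑ a : Bool, ∑ c : Bool, p a b c x y z) = ∑ a, ∑ c, p a b c x' y z' := by
    intro b x x' y z z'
    rw [Finset.sum_congr rfl fun a _ => hNSz a b x y z z', Finset.sum_comm,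
      Finset.sum_congr rfl fun c _ => hNSx b c x x' y z', Finset.sum_comm]
  have MCinv : ∀ c x x' y y' z,
      (∑ a : Bool, ∑ b : Bool, p a b c x y z) = ∑ a, ∑ b, p a b c x' y' z := by
    intro c x x' y y' z
    rw [Finset.sum_congr rfl fun a _ => hNSy a c x y y' z, Finset.sum_comm,
      Finset.sum_congr rfl fun b _ => hNSx b c x x' y' z, Finset.sum_comm]
  -- A-marginal at x = 0 : outcome true with prob 1
  have hn000 := hnorm 0 0 0
  simp only [Fintype.sum_bool] at hn000
  have MA0 : ∀ y z, (∑ b : Bool, ∑ c : Bool, p true b c 0 y z) = 1 := by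
    intro y z
    rw [MAinv true 0 y 0 z 0]
    simp only [Fintype.sum_bool]
    obtain ⟨h1a, _⟩ := hb true true false 0 0 0
    obtain ⟨h2a, _⟩ := hb true false true 0 0 0
    obtain ⟨h3a, _⟩ := hb true false false 0 0 0
    obtain ⟨h4a, _⟩ := hb false true true 0 0 0
    obtain ⟨h5a, _⟩ := hb false true false 0 0 0
    obtain ⟨h6a, _⟩ := hb false false true 0 0 0
    obtain ⟨h7a, _⟩ := hb false false false 0 0 0
    linarith
  have MB0 : ∀ x z, (∑ a : Bool, ∑ c : Bool, p a true c x 0 z) = 1 := by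
    intro x z
    rw [MBinv true x 0 0 z 0]
    simp only [Fintype.sum_bool]
    obtain ⟨h1a, _⟩ := hb true true false 0 0 0
    obtain ⟨h2a, _⟩ := hb true false true 0 0 0
    obtain ⟨h3a, _⟩ := hb true false false 0 0 0
    obtain ⟨h4a, _⟩ := hb false true true 0 0 0
    obtain ⟨h5a, _⟩ := hb false true false 0 0 0
    obtain ⟨h6a, _⟩ := hb false false true 0 0 0
    obtain ⟨h7a, _⟩ := hb false false false 0 0 0
    linarith
  have MC0 : ∀ x y, (∑ a : Bool, ∑ b : Bool, p a b true x y 0) = 1 := by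
    intro x y
    rw [MCinv true x 0 y 0 0]
    simp only [Fintype.sum_bool]
    obtain ⟨h1a, _⟩ := hb true true false 0 0 0
    obtain ⟨h2a, _⟩ := hb true false true 0 0 0
    obtain ⟨h3a, _⟩ := hb true false false 0 0 0
    obtain ⟨h4a, _⟩ := hb false true true 0 0 0
    obtain ⟨h5a, _⟩ := hb false true false 0 0 0
    obtain ⟨h6a, _⟩ := hb false false true 0 0 0
    obtain ⟨h7a, _⟩ := hb false false false 0 0 0
    linarith
  -- Step: c-outcome at z = 1 is false, with prob 1
  have MCf : (∑ a : Bool, ∑ b : Bool, p a b false 1 1 1) = 1 := by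
    rw [MCinv false 1 0 1 0 1]
    have hma := MA0 0 1
    have hh3 := h3 0
    have hn := hnorm 0 0 1
    simp only [Fintype.sum_bool] at hma hh3 hn ⊢
    obtain ⟨h1a, _⟩ := hb true true true 0 0 1
    obtain ⟨h2a, _⟩ := hb true false true 0 0 1
    obtain ⟨h3a, _⟩ := hb false true true 0 0 1
    obtain ⟨h4a, _⟩ := hb false false true 0 0 1
    obtain ⟨h5a, _⟩ := hb false true false 0 0 1
    obtain ⟨h6a, _⟩ := hb false false false 0 0 1
    linarith
  -- Step: a-outcome at x = 1 is false, with prob 1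
  have MAf : (∑ b : Bool, ∑ c : Bool, p false b c 1 1 1) = 1 := by
    rw [MAinv false 1 1 0 1 0]
    have hmb := MB0 1 0
    have hh1 := h1 0
    have hn := hnorm 1 0 0
    simp only [Fintype.sum_bool] at hmb hh1 hn ⊢
    obtain ⟨h1a, _⟩ := hb true true true 1 0 0
    obtain ⟨h2a, _⟩ := hb true true false 1 0 0
    obtain ⟨h3a, _⟩ := hb true false true 1 0 0
    obtain ⟨h4a, _⟩ := hb true false false 1 0 0
    obtain ⟨h5a, _⟩ := hb false false true 1 0 0
    obtain ⟨h6a, _⟩ := hb false false false 1 0 0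
    linarith
  -- Step: b-outcome at y = 1 is false, with prob 1
  have MBf : (∑ a : Bool, ∑ c : Bool, p a false c 1 1 1) = 1 := by
    rw [MBinv false 1 0 1 1 0]
    have hmc := MC0 0 1
    have hh2 := h2 0
    have hh2' := h2 1
    have hn := hnorm 0 1 0
    simp only [Fintype.sum_bool] at hmc hh2 hh2' hn ⊢
    obtain ⟨h1a, _⟩ := hb true true true 0 1 0
    obtain ⟨h2a, _⟩ := hb false true true 0 1 0
    obtain ⟨h3a, _⟩ := hb true true false 0 1 0
    obtain ⟨h4a, _⟩ := hb false true false 0 1 0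
    obtain ⟨h5a, _⟩ := hb true false false 0 1 0
    obtain ⟨h6a, _⟩ := hb false false false 0 1 0
    linarith
  -- Combine at settings (1,1,1)
  have hn111 := hnorm 1 1 1
  simp only [Fintype.sum_bool] at hn111 MAf MBf MCf
  obtain ⟨h1a, _⟩ := hb true true true 1 1 1
  obtain ⟨h2a, _⟩ := hb true true false 1 1 1
  obtain ⟨h3a, _⟩ := hb true false true 1 1 1
  obtain ⟨h4a, _⟩ := hb true false false 1 1 1
  obtain ⟨h5a, _⟩ := hb false true true 1 1 1
  obtain ⟨h6a, _⟩ := hb false true false 1 1 1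
  obtain ⟨h7a, _⟩ := hb false false true 1 1 1
  linarith
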